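/- arXiv:2604.14646 — 2 statements merged into one kernel-verified Lean document; each statement's English description precedes it below -/
import Mathlib

section
/- For a softmax policy π(a) = exp(z_a)/Σ_b exp(z_b) on a finite action set, and any function A on actions, the directional derivative of the entropy H(softmax(z + tA)) at t = 0 equals −Cov_{a∼π}(log π(a), A(a)), where Cov denotes covariance under π. -/
open Real Finset

noncomputable def softmax {α : Type*} [Fintype α] (z : α → ℝ) (a : α) : ℝ :=
  Real.exp (z a) / ∑ b, Real.exp (z b)

noncomputable def entropy {α : Type*} [Fintype α] (p : α → ℝ) : ℝ :=
  -∑ a, p a * Real.log (p a)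

noncomputable def cov {α : Type*} [Fintype α] (p f g : α → ℝ) : ℝ :=
  (∑ a, p a * f a * g a) - (∑ a, p a * f a) * (∑ a, p a * g a)

/-- The directional derivative of the entropy of `softmax (z + t • A)` at `t = 0`
equals `-Cov_{a ∼ softmax z}(log (softmax z) a, A a)`. -/
theorem stmt0 {α : Type*} [Fintype α] [Nonempty α] (z A : α → ℝ) :
    HasDerivAt (fun t : ℝ => entropy (softmax (fun a => z a + t * A a)))
      (-(cov (softmax z) (fun a => Real.log (softmax z a)) A)) 0 := by
  classical
  set E : ℝ → ℝ := fun t => ∑ b, Real.exp (z b + t * A b) with hEdef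
  set F : ℝ → ℝ := fun t => ∑ a, Real.exp (z a + t * A a) * (z a + t * A a) with hFdef
  have hEpos : ∀ t, 0 < E t := fun t =>
    Finset.sum_pos (fun b _ => Real.exp_pos _) Finset.univ_nonempty
  -- derivative of E at 0
  have hEd : HasDerivAt E (∑ b, Real.exp (z b) * A b) 0 := by
    apply HasDerivAt.fun_sum
    intro b _
    have h1 : HasDerivAt (fun t : ℝ => z b + t * A b) (A b) 0 :=
      (hasDerivAt_mul_const (A b)).const_add (z b)
    have := h1.exp
    simpa using this
  -- derivative of F at 0
  have hFd : HasDerivAt F (∑ a, (Real.exp (z a) * A a * z a + Real.exp (z a) * A a)) 0 := by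
    apply HasDerivAt.fun_sum
    intro a _
    have h1 : HasDerivAt (fun t : ℝ => z a + t * A a) (A a) 0 :=
      (hasDerivAt_mul_const (A a)).const_add (z a)
    have h2 := (h1.exp).fun_mul h1
    simpa using h2
  set S1 : ℝ := ∑ b, Real.exp (z b) * A b with hS1
  set S2 : ℝ := ∑ a, Real.exp (z a) * z a with hS2
  set E0 : ℝ := ∑ b, Real.exp (z b) with hE0
  have hE00 : E 0 = E0 := by simp [hEdef, hE0]
  have hF0 : F 0 = S2 := by simp [hFdef, hS2]
  have hE0pos : 0 < E0 := by rw [← hE00]; exact hEpos 0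
  -- derivative of the rewritten entropy
  have hHd : HasDerivAt (fun t => Real.log (E t) - F t / E t)
      (S1 / E0 - ((∑ a, (Real.exp (z a) * A a * z a + Real.exp (z a) * A a)) * E0
        - S2 * S1) / (E0 ^ 2)) 0 := by
    have hlog := hEd.log (hEpos 0).ne'
    have hdiv := hFd.div hEd (hEpos 0).ne'
    have := hlog.sub hdiv
    rw [hE00, hF0] at this
    exact this
  -- the entropy function equals the rewritten function
  have hfun : (fun t : ℝ => entropy (softmax (fun a => z a + t * A a)))
      = fun t => Real.log (E t) - F t / E t := by
    funext t
    have hEt := hEpos t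
    have hlogp : ∀ a : α, Real.log (Real.exp (z a + t * A a) / E t)
        = (z a + t * A a) - Real.log (E t) := by
      intro a
      rw [Real.log_div (Real.exp_ne_zero _) hEt.ne', Real.log_exp]
    simp only [entropy, softmax, hEdef]
    have : ∀ a : α, Real.exp (z a + t * A a) / E t
        * Real.log (Real.exp (z a + t * A a) / E t)
        = Real.exp (z a + t * A a) * (z a + t * A a) / E t
          - Real.log (E t) * (Real.exp (z a + t * A a) / E t) := by
      intro a
      rw [hlogp a]
      field_simp
    rw [show (∑ a, Real.exp (z a + t * A a) / E t
        * Real.log (Real.exp (z a + t * A a) / E t))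
        = ∑ a, (Real.exp (z a + t * A a) * (z a + t * A a) / E t
          - Real.log (E t) * (Real.exp (z a + t * A a) / E t)) from
      Finset.sum_congr rfl (fun a _ => this a)]
    rw [Finset.sum_sub_distrib, ← Finset.sum_div, ← Finset.mul_sum, ← Finset.sum_div]
    have hsum : (∑ a, Real.exp (z a + t * A a)) = E t := rfl
    rw [hsum]
    rw [div_self hEt.ne', mul_one]
    show -((F t) / E t - Real.log (E t)) = Real.log (E t) - F t / E t
    ring
  rw [hfun]
  -- now identify the derivative values
  convert hHd using 1
  have hsplit : (∑ a, (Real.exp (z a) * A a * z a + Real.exp (z a) * A a))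
      = (∑ a, Real.exp (z a) * A a * z a) + S1 := by
    rw [Finset.sum_add_distrib]
  set S3 : ℝ := ∑ a, Real.exp (z a) * A a * z a with hS3
  set L : ℝ := Real.log E0 with hL
  -- compute cov
  have hlogsm : ∀ a : α, Real.log (softmax z a) = z a - L := by
    intro a
    rw [softmax, ← hE0, Real.log_div (Real.exp_ne_zero _) hE0pos.ne', Real.log_exp]
  have hc1 : (∑ a, softmax z a * Real.log (softmax z a) * A a) = (S3 - L * S1) / E0 := by
    rw [eq_div_iff hE0pos.ne', Finset.sum_mul]
    rw [show (∑ a, softmax z a * Real.log (softmax z a) * A a * E0)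
        = ∑ a, (Real.exp (z a) * A a * z a - L * (Real.exp (z a) * A a)) from
      Finset.sum_congr rfl (fun a _ => by
        rw [hlogsm a, softmax, ← hE0]; field_simp)]
    rw [Finset.sum_sub_distrib, ← Finset.mul_sum, ← hS3, ← hS1]
  have hc2 : (∑ a, softmax z a * Real.log (softmax z a)) = (S2 - L * E0) / E0 := by
    rw [eq_div_iff hE0pos.ne', Finset.sum_mul]
    rw [show (∑ a, softmax z a * Real.log (softmax z a) * E0)
        = ∑ a, (Real.exp (z a) * z a - L * Real.exp (z a)) from
      Finset.sum_congr rfl (fun a _ => by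
        rw [hlogsm a, softmax, ← hE0]; field_simp)]
    rw [Finset.sum_sub_distrib, ← Finset.mul_sum, ← hS2, ← hE0]
  have hc3 : (∑ a, softmax z a * A a) = S1 / E0 := by
    rw [eq_div_iff hE0pos.ne', Finset.sum_mul]
    rw [show (∑ a, softmax z a * A a * E0) = ∑ a, Real.exp (z a) * A a from
      Finset.sum_congr rfl (fun a _ => by
        rw [softmax, ← hE0]; field_simp)]
  rw [cov, hc1, hc2, hc3, hsplit]
  field_simp
  ring
end

section
/- Unbiasedness of the Pass@k estimator: if c is a Binomial(n, p) random variable counting correct samples among n i.i.d. attempts with success probability p, and k ≤ n, then E[ C(n−c, k) / C(n, k) ] = (1−p)^k, where C(m,k) denotes the binomial coefficient (taken to be 0 when m < k). Equivalently, E[1 − C(n−c,k)/C(n,k)] = 1 − (1−p)^k. -/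
open Finset

lemma key_choose (n k c : ℕ) (hc : c ≤ n - k) (hkn : k ≤ n) :
    n.choose c * (n - c).choose k = n.choose k * (n - k).choose c := by
  have hck : c + k ≤ n := by omega
  have h1 := Nat.choose_mul (n := n) (k := c + k) (s := c) (Nat.le_add_right _ _)
  have h2 := Nat.choose_mul (n := n) (k := c + k) (s := k) (Nat.le_add_left _ _)
  rw [Nat.add_sub_cancel_left] at h1
  rw [Nat.add_sub_cancel] at h2
  rw [Nat.choose_symm_add] at h1
  exact h1.symm.trans h2

/-- Unbiasedness of the Pass@k estimator: if `c ∼ Binomial(n, p)` then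
`E[C(n−c,k)/C(n,k)] = (1−p)^k` (with `C(m,k) = 0` for `m < k`). -/
theorem stmt14 (n k : ℕ) (hk : 1 ≤ k) (hkn : k ≤ n) (p : ℝ) (hp0 : 0 ≤ p) (hp1 : p ≤ 1) :
    ∑ c ∈ Finset.range (n + 1),
        (n.choose c : ℝ) * p ^ c * (1 - p) ^ (n - c) *
          ((n - c).choose k : ℝ) / (n.choose k : ℝ)
      = (1 - p) ^ k := by
  have hC : (0 : ℝ) < (n.choose k : ℝ) := by
    exact_mod_cast Nat.choose_pos hkn
  set m := n - k with hm
  have hsub : Finset.range (m + 1) ⊆ Finset.range (n + 1) := by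
    apply Finset.range_subset_range.2; omega
  rw [← Finset.sum_subset hsub]
  · have : ∀ c ∈ Finset.range (m + 1),
        (n.choose c : ℝ) * p ^ c * (1 - p) ^ (n - c) *
          ((n - c).choose k : ℝ) / (n.choose k : ℝ)
        = (1 - p) ^ k * ((m.choose c : ℝ) * p ^ c * (1 - p) ^ (m - c)) := by
      intro c hc
      rw [Finset.mem_range] at hc
      have hcm : c ≤ m := by omega
      have hkey := key_choose n k c hcm hkn
      have hnc : n - c = k + (m - c) := by omega
      rw [hnc, pow_add]
      have hkey' : (n.choose c : ℝ) * ((k + (m - c)).choose k : ℝ)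
          = (n.choose k : ℝ) * (m.choose c : ℝ) := by
        have : n - c = k + (m - c) := hnc
        rw [← this]
        exact_mod_cast hkey
      rw [div_eq_iff hC.ne']
      linear_combination (p ^ c * (1 - p) ^ k * (1 - p) ^ (m - c)) * hkey' 
    rw [Finset.sum_congr rfl this, ← Finset.mul_sum]
    have hbin : ∑ c ∈ Finset.range (m + 1),
        (m.choose c : ℝ) * p ^ c * (1 - p) ^ (m - c) = 1 := by
      calc ∑ c ∈ Finset.range (m + 1), (m.choose c : ℝ) * p ^ c * (1 - p) ^ (m - c)
          = ∑ c ∈ Finset.range (m + 1), p ^ c * (1 - p) ^ (m - c) * (m.choose c : ℝ) := by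
            exact Finset.sum_congr rfl fun c _ => by ring
        _ = (p + (1 - p)) ^ m := (add_pow p (1 - p) m).symm
        _ = 1 := by norm_num
    rw [hbin, mul_one]
  · intro c hcn hcm
    rw [Finset.mem_range] at *
    have : n - c < k := by omega
    rw [Nat.choose_eq_zero_of_lt this]
    simp
end
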